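/- Let μ be a measure as in the context with μ(ℝ∖{0}) > 0, and let f be of bistable type with ∫₀¹ f(s) ds > 0. Suppose (c₁, u₁) and (c₂, u₂) are pairs with c₁ > 0, c₂ > 0 and u₁, u₂ : ℝ → ℝ bounded, monotone nonincreasing, of class C¹, such that for every x ∈ ℝ the principal values D_μ u_i(x) exist and D_μ u_i(x) + c_i u_i'(x) + f(u_i(x)) = 0, with lim_{x→−∞} u_i(x) = 1 and lim_{x→+∞} u_i(x) = 0 for i = 1, 2. Then c₁ = c₂. -/

import Mathlib

open MeasureTheory Filter Topology Set
open scoped ENNReal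

/-- Truncated nonlocal operator `D_{μ,δ} u (x) = ∫_{|z| ≥ δ} (u(x+z) − u(x)) dμ(z)`. -/
noncomputable def Dtrunc (μ : Measure ℝ) (u : ℝ → ℝ) (δ : ℝ) (x : ℝ) : ℝ :=
  ∫ z in {z : ℝ | δ ≤ |z|}, (u (x + z) - u x) ∂μ

/-- The principal value `D_μ u (x)` exists and equals `L`. -/
def HasPV (μ : Measure ℝ) (u : ℝ → ℝ) (x : ℝ) (L : ℝ) : Prop :=
  Tendsto (fun δ => Dtrunc μ u δ x) (𝓝[>] (0 : ℝ)) (𝓝 L)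

/-- A symmetric diffuse Lévy measure as in the paper. -/
structure LevyMeasure (μ : Measure ℝ) : Prop where
  symm : Measure.map (fun z : ℝ => -z) μ = μ
  moment : ∫⁻ z, ENNReal.ofReal (min 1 (z ^ 2)) ∂μ < ⊤
  diffuse : ∀ x : ℝ, x ≠ 0 → μ {x} = 0

/-- A bistable nonlinearity with threshold `θ`. -/
structure Bistable (f : ℝ → ℝ) (θ : ℝ) : Prop where
  smooth : ContDiff ℝ 1 f
  f0 : f 0 = 0
  f1 : f 1 = 0
  df1 : deriv f 1 < 0
  θ_mem : θ ∈ Set.Ioo (0 : ℝ) 1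
  df0 : deriv f 0 < 0
  neg : ∀ s ∈ Set.Ioo (0 : ℝ) θ, f s < 0
  fθ : f θ = 0
  pos : ∀ s ∈ Set.Ioo θ (1 : ℝ), 0 < f s
  dfθ : 0 < deriv f θ

/-- An ignition nonlinearity with threshold `θ`. -/
structure Ignition (f : ℝ → ℝ) (θ : ℝ) : Prop where
  smooth : ContDiff ℝ 1 f
  f1 : f 1 = 0
  df1 : deriv f 1 < 0
  θ_mem : θ ∈ Set.Ioo (0 : ℝ) 1
  zero : ∀ s ∈ Set.Icc (0 : ℝ) θ, f s = 0
  pos : ∀ s ∈ Set.Ioo θ (1 : ℝ), 0 < f s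

/-- A monostable nonlinearity. -/
structure Monostable (f : ℝ → ℝ) : Prop where
  smooth : ContDiff ℝ 1 f
  f0 : f 0 = 0
  f1 : f 1 = 0
  df1 : deriv f 1 < 0
  pos : ∀ s ∈ Set.Ioo (0 : ℝ) 1, 0 < f s


namespace SpeedAux

lemma mem01 {u : ℝ → ℝ} (ha : Antitone u) (hb : Tendsto u atBot (𝓝 1))
    (ht : Tendsto u atTop (𝓝 0)) (x : ℝ) : 0 ≤ u x ∧ u x ≤ 1 := by
  constructor
  · exact le_of_tendsto ht (eventually_atTop.2 ⟨x, fun y hy => ha hy⟩)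
  · exact ge_of_tendsto hb (eventually_atBot.2 ⟨x, fun y hy => ha hy⟩)

lemma deriv_nonpos {u : ℝ → ℝ} (ha : Antitone u) (hd : Differentiable ℝ u) (x : ℝ) :
    deriv u x ≤ 0 := by
  have h := hasDerivAt_iff_tendsto_slope.1 (hd x).hasDerivAt
  have h' : Tendsto (slope u x) (𝓝[>] x) (𝓝 (deriv u x)) :=
    h.mono_left (nhdsWithin_mono x fun y (hy : x < y) => ne_of_gt hy)
  refine le_of_tendsto h' ?_
  filter_upwards [self_mem_nhdsWithin] with y hy
  have h1 : u y ≤ u x := ha (le_of_lt hy)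
  have h2 : (0:ℝ) < y - x := sub_pos.2 hy
  rw [slope_def_field]
  exact div_nonpos_of_nonpos_of_nonneg (by linarith) (by linarith)

lemma measurable_tail (δ : ℝ) : MeasurableSet {z : ℝ | δ ≤ |z|} :=
  (isClosed_le continuous_const continuous_abs).measurableSet

lemma measure_tail_lt_top {μ : Measure ℝ} (hμ : LevyMeasure μ) {δ : ℝ} (hδ : 0 < δ) :
    μ {z : ℝ | δ ≤ |z|} < ⊤ := by
  set c : ℝ≥0∞ := ENNReal.ofReal (min 1 (δ ^ 2)) with hc
  have hc0 : c ≠ 0 := by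
    simp only [hc, ne_eq, ENNReal.ofReal_eq_zero, not_le]
    have : (0:ℝ) < δ ^ 2 := by positivity
    exact lt_min one_pos this
  have hcT : c ≠ ⊤ := ENNReal.ofReal_ne_top
  have hmeas : AEMeasurable (fun z : ℝ => ENNReal.ofReal (min 1 (z ^ 2))) μ :=
    (ENNReal.measurable_ofReal.comp ((measurable_const.min (measurable_id.pow_const 2)))).aemeasurable
  have hmarkov := mul_meas_ge_le_lintegral₀ hmeas c
  have hsub : {z : ℝ | δ ≤ |z|} ⊆ {z : ℝ | c ≤ ENNReal.ofReal (min 1 (z ^ 2))} := by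
    intro z hz
    simp only [mem_setOf_eq] at hz ⊢
    apply ENNReal.ofReal_le_ofReal
    apply min_le_min le_rfl
    have : δ ^ 2 ≤ |z| ^ 2 := by
      apply pow_le_pow_left₀ hδ.le hz
    simpa [sq_abs] using this
  have h1 : c * μ {z : ℝ | δ ≤ |z|} ≤ ∫⁻ z, ENNReal.ofReal (min 1 (z ^ 2)) ∂μ :=
    le_trans (mul_le_mul_of_nonneg_left (measure_mono hsub) zero_le) hmarkov
  by_contra htop
  push_neg at htop
  have : μ {z : ℝ | δ ≤ |z|} = ⊤ := top_le_iff.mp htop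
  rw [this, ENNReal.mul_top hc0] at h1
  exact absurd (top_le_iff.mp h1) (ne_of_lt hμ.moment)

lemma integrableOn_tail {μ : Measure ℝ} (hμ : LevyMeasure μ) {g : ℝ → ℝ} (hg : Continuous g)
    {C : ℝ} (hC : ∀ z, |g z| ≤ C) {δ : ℝ} (hδ : 0 < δ) :
    IntegrableOn g {z : ℝ | δ ≤ |z|} μ := by
  haveI : IsFiniteMeasure (μ.restrict {z : ℝ | δ ≤ |z|}) := by
    constructor
    rw [Measure.restrict_apply_univ]
    exact measure_tail_lt_top hμ hδ
  exact Integrable.mono' (integrable_const C) hg.aestronglyMeasurable (Eventually.of_forall hC)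

lemma dtrunc_translate (μ : Measure ℝ) (u : ℝ → ℝ) (ξ δ x : ℝ) :
    Dtrunc μ (fun y => u (y - ξ)) δ x = Dtrunc μ u δ (x - ξ) := by
  unfold Dtrunc
  apply setIntegral_congr_fun (measurable_tail δ)
  intro z _
  show u (x + z - ξ) - u (x - ξ) = u (x - ξ + z) - u (x - ξ)
  have : x + z - ξ = x - ξ + z := by ring
  rw [this]

lemma hasPV_translate {μ : Measure ℝ} {u : ℝ → ℝ} {ξ x L : ℝ}
    (h : HasPV μ u (x - ξ) L) : HasPV μ (fun y => u (y - ξ)) x L := by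
  unfold HasPV at h ⊢
  convert h using 2 with δ
  exact dtrunc_translate μ u ξ δ x

lemma exists_max {g : ℝ → ℝ} (hg : Continuous g) (h0b : Tendsto g atBot (𝓝 0))
    (h0t : Tendsto g atTop (𝓝 0)) {x₀ : ℝ} (hpos : 0 < g x₀) :
    ∃ x', (∀ x, g x ≤ g x') := by
  obtain ⟨A, hA⟩ := eventually_atBot.1 (h0b.eventually_lt_const hpos)
  obtain ⟨B, hB⟩ := eventually_atTop.1 (h0t.eventually_lt_const hpos)
  set a := min A x₀ with ha
  set b := max B x₀ with hb
  have hab : a ≤ b := le_trans (min_le_right _ _) (le_max_right _ _)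
  obtain ⟨x', hx'mem, hx'⟩ := isCompact_Icc.exists_isMaxOn (nonempty_Icc.2 hab)
    (hg.continuousOn (s := Icc a b))
  refine ⟨x', fun x => ?_⟩
  have hx0max : g x₀ ≤ g x' := (isMaxOn_iff.1 hx') x₀ ⟨min_le_right A x₀, le_max_right B x₀⟩
  rcases lt_or_ge x a with h | h
  · exact le_trans (hA x (le_of_lt (lt_of_lt_of_le h (min_le_left _ _)))).le hx0max
  rcases le_or_gt x b with h2 | h2
  · exact (isMaxOn_iff.1 hx') x ⟨h, h2⟩
  · exact le_trans (hB x (le_of_lt (lt_of_le_of_lt (le_max_left _ _) h2))).le hx0max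

lemma eta_lemma {f : ℝ → ℝ} {θ : ℝ} (hf : Bistable f θ) :
    ∃ η : ℝ, 0 < η ∧ ∀ s, 0 ≤ s → s ≤ 1 → 0 ≤ deriv f s → η ≤ s ∧ s ≤ 1 - η := by
  have hdc : Continuous (deriv f) := hf.smooth.continuous_deriv le_rfl
  have h0 : ∀ᶠ s in 𝓝 (0:ℝ), deriv f s < 0 := (hdc.tendsto 0).eventually_lt_const hf.df0
  have h1 : ∀ᶠ s in 𝓝 (1:ℝ), deriv f s < 0 := (hdc.tendsto 1).eventually_lt_const hf.df1
  rw [Metric.eventually_nhds_iff] at h0 h1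
  obtain ⟨ε₀, hε₀, H0⟩ := h0
  obtain ⟨ε₁, hε₁, H1⟩ := h1
  refine ⟨min (ε₀/2) (ε₁/2), by positivity, fun s hs0 hs1 hds => ?_⟩
  constructor
  · by_contra h
    push_neg at h
    have hd : dist s 0 < ε₀ := by
      rw [Real.dist_eq, sub_zero, abs_of_nonneg hs0]
      have := lt_of_lt_of_le h (min_le_left _ _)
      linarith
    linarith [H0 hd]
  · by_contra h
    push_neg at h
    have hd : dist s 1 < ε₁ := by
      rw [Real.dist_eq, abs_of_nonpos (by linarith : s - 1 ≤ 0)]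
      have := lt_of_lt_of_le (by linarith : 1 - min (ε₀/2) (ε₁/2) < s) (le_refl s)
      have hmin := min_le_right (ε₀/2) (ε₁/2)
      linarith
    linarith [H1 hd]

lemma mvt_lemma {f : ℝ → ℝ} (hf : ContDiff ℝ 1 f) {p q : ℝ} (hpq : p < q)
    (hle : f p ≤ f q) : ∃ s, p ≤ s ∧ s ≤ q ∧ 0 ≤ deriv f s := by
  have hd : Differentiable ℝ f := hf.differentiable one_ne_zero
  obtain ⟨c, hc, hc'⟩ := exists_hasDerivAt_eq_slope f (deriv f) hpq
    hd.continuous.continuousOn (fun x _ => (hd x).hasDerivAt)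
  refine ⟨c, hc.1.le, hc.2.le, ?_⟩
  rw [hc']
  exact div_nonneg (by linarith) (by linarith)

lemma max_point {μ : Measure ℝ} (hμ : LevyMeasure μ)
    {f : ℝ → ℝ} {c₁ c₂ : ℝ} {u₁ u₂ : ℝ → ℝ} (hlt : c₂ < c₁)
    (ha₁ : Antitone u₁)
    (hs₁ : ContDiff ℝ 1 u₁) (hs₂ : ContDiff ℝ 1 u₂)
    (he₁ : ∀ x, ∃ L : ℝ, HasPV μ u₁ x L ∧ L + c₁ * deriv u₁ x + f (u₁ x) = 0)
    (he₂ : ∀ x, ∃ L : ℝ, HasPV μ u₂ x L ∧ L + c₂ * deriv u₂ x + f (u₂ x) = 0)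
    (hb₁ : ∀ x, 0 ≤ u₁ x ∧ u₁ x ≤ 1) (hb₂ : ∀ x, 0 ≤ u₂ x ∧ u₂ x ≤ 1)
    {ξ xs : ℝ}
    (hmax : ∀ x, u₁ x - u₂ (x - ξ) ≤ u₁ xs - u₂ (xs - ξ)) :
    f (u₂ (xs - ξ)) ≤ f (u₁ xs) ∧
      (u₁ xs = u₂ (xs - ξ) → ∀ δ : ℝ, 0 < δ →
        ∫ z in {z : ℝ | δ ≤ |z|}, (u₂ (xs + z - ξ) - u₁ (xs + z)) ∂μ = 0) := by
  have hd₁ : Differentiable ℝ u₁ := hs₁.differentiable one_ne_zero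
  have hd₂ : Differentiable ℝ u₂ := hs₂.differentiable one_ne_zero
  set v : ℝ → ℝ := fun y => u₂ (y - ξ) with hv
  have hdv : Differentiable ℝ v := hd₂.comp (differentiable_id.sub_const ξ)
  obtain ⟨L₁, hPV₁, heq₁⟩ := he₁ xs
  obtain ⟨L₂, hPV₂, heq₂⟩ := he₂ (xs - ξ)
  have hPV₂' : HasPV μ v xs L₂ := hasPV_translate hPV₂
  -- derivative equality at the max point
  have hloc : IsLocalMax (fun x => u₁ x - v x) xs := Eventually.of_forall hmax
  have hder0 : deriv (fun x => u₁ x - v x) xs = 0 := hloc.deriv_eq_zero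
  have hdvx : deriv v xs = deriv u₂ (xs - ξ) := deriv_comp_sub_const u₂ ξ xs
  have hsub : deriv (fun x => u₁ x - v x) xs = deriv u₁ xs - deriv v xs :=
    deriv_sub (hd₁ xs) (hdv xs)
  have hderiv_eq : deriv u₂ (xs - ξ) = deriv u₁ xs := by
    rw [hsub, hdvx] at hder0
    linarith [hder0]
  set m := deriv u₁ xs with hmdef
  have hm : m ≤ 0 := deriv_nonpos ha₁ hd₁ xs
  -- the truncated integrals of the difference
  set G : ℝ → ℝ := fun z => (u₁ xs - v xs) - (u₁ (xs + z) - v (xs + z)) with hG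
  have hGcont : Continuous G := by
    apply continuous_const.sub
    exact ((hd₁.continuous.comp (continuous_const.add continuous_id)).sub
      (hd₂.continuous.comp ((continuous_const.add continuous_id).sub continuous_const)))
  have hGbd : ∀ z, |G z| ≤ 4 := by
    intro z
    have h1 := hb₁ xs; have h2 := hb₂ (xs - ξ); have h3 := hb₁ (xs + z)
    have h4 := hb₂ (xs + z - ξ)
    simp only [hG, hv]
    rw [abs_le]
    constructor <;> nlinarith [h1.1, h1.2, h2.1, h2.2, h3.1, h3.2, h4.1, h4.2]
  have hGnn : ∀ z, 0 ≤ G z := fun z => sub_nonneg.2 (hmax (xs + z))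
  have hGint : ∀ δ : ℝ, 0 < δ → IntegrableOn G {z : ℝ | δ ≤ |z|} μ :=
    fun δ hδ => integrableOn_tail hμ hGcont hGbd hδ
  set T : ℝ → ℝ := fun δ => ∫ z in {z : ℝ | δ ≤ |z|}, G z ∂μ with hTdef
  have hIu : ∀ δ : ℝ, 0 < δ → IntegrableOn (fun z => u₁ (xs + z) - u₁ xs) {z : ℝ | δ ≤ |z|} μ := by
    intro δ hδ
    refine integrableOn_tail (C := 1) hμ ((hd₁.continuous.comp (continuous_const.add continuous_id)).sub
      continuous_const) (fun z => ?_) hδ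
    have h1 := hb₁ (xs + z); have h2 := hb₁ xs
    show |u₁ (xs + z) - u₁ xs| ≤ 1
    rw [abs_le]; constructor <;> linarith [h1.1, h1.2, h2.1, h2.2]
  have hIv : ∀ δ : ℝ, 0 < δ → IntegrableOn (fun z => v (xs + z) - v xs) {z : ℝ | δ ≤ |z|} μ := by
    intro δ hδ
    refine integrableOn_tail (C := 1) hμ ((hdv.continuous.comp (continuous_const.add continuous_id)).sub
      continuous_const) (fun z => ?_) hδ
    have h1 := hb₂ (xs + z - ξ); have h2 := hb₂ (xs - ξ)
    show |u₂ (xs + z - ξ) - u₂ (xs - ξ)| ≤ 1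
    rw [abs_le]; constructor <;> linarith [h1.1, h1.2, h2.1, h2.2]
  have hT : ∀ δ : ℝ, 0 < δ → Dtrunc μ v δ xs - Dtrunc μ u₁ δ xs = T δ := by
    intro δ hδ
    unfold Dtrunc
    rw [← integral_sub (hIv δ hδ) (hIu δ hδ)]
    apply setIntegral_congr_fun (measurable_tail δ)
    intro z _
    simp only [hG]
    ring
  have hTlim : Tendsto T (𝓝[>] (0:ℝ)) (𝓝 (L₂ - L₁)) := by
    refine (hPV₂'.sub hPV₁).congr' ?_
    filter_upwards [self_mem_nhdsWithin] with δ hδ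
    exact hT δ hδ
  have hTnonneg : ∀ δ : ℝ, 0 < δ → 0 ≤ T δ := fun δ _ =>
    setIntegral_nonneg (measurable_tail δ) (fun z _ => hGnn z)
  have hL : 0 ≤ L₂ - L₁ := by
    refine ge_of_tendsto hTlim ?_
    filter_upwards [self_mem_nhdsWithin] with δ hδ
    exact hTnonneg δ hδ
  have hTleL : ∀ δ : ℝ, 0 < δ → T δ ≤ L₂ - L₁ := by
    intro δ hδ
    refine ge_of_tendsto hTlim ?_
    filter_upwards [Ioc_mem_nhdsGT_of_mem ⟨le_refl (0:ℝ), hδ⟩] with δ' hδ'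
    exact setIntegral_mono_set (hGint δ' hδ'.1) (Eventually.of_forall hGnn)
      (HasSubset.Subset.eventuallyLE (fun z hz => le_trans hδ'.2 hz))
  -- algebra from the two equations
  have h2m : deriv u₂ (xs - ξ) = m := hderiv_eq
  rw [h2m] at heq₂
  have hkey : L₂ - L₁ = c₁ * m - c₂ * m + (f (u₁ xs) - f (u₂ (xs - ξ))) := by
    linarith [heq₁, heq₂]
  have hcm : (c₁ - c₂) * m ≤ 0 :=
    mul_nonpos_of_nonneg_of_nonpos (sub_nonneg.2 hlt.le) hm
  constructor
  · nlinarith [hcm, hL, hkey]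
  · intro h0 δ hδ
    have hfq : f (u₁ xs) = f (u₂ (xs - ξ)) := by rw [h0]
    have hL0 : L₂ - L₁ ≤ 0 := by nlinarith [hcm, hkey, hfq]
    have hTδ : T δ = 0 := le_antisymm (by linarith [hTleL δ hδ]) (hTnonneg δ hδ)
    have hcongr : ∫ z in {z : ℝ | δ ≤ |z|}, (u₂ (xs + z - ξ) - u₁ (xs + z)) ∂μ = T δ := by
      apply setIntegral_congr_fun (measurable_tail δ)
      intro z _
      show u₂ (xs + z - ξ) - u₁ (xs + z) = G z
      simp only [hG, hv]
      rw [h0]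
      ring
    rw [hcongr, hTδ]

lemma key {μ : Measure ℝ} (hμ : LevyMeasure μ) (hμ0 : 0 < μ ({(0 : ℝ)}ᶜ))
    {f : ℝ → ℝ} {θ : ℝ} (hf : Bistable f θ)
    {c₁ c₂ : ℝ} {u₁ u₂ : ℝ → ℝ} (hlt : c₂ < c₁)
    (ha₁ : Antitone u₁) (ha₂ : Antitone u₂)
    (hs₁ : ContDiff ℝ 1 u₁) (hs₂ : ContDiff ℝ 1 u₂)
    (he₁ : ∀ x, ∃ L : ℝ, HasPV μ u₁ x L ∧ L + c₁ * deriv u₁ x + f (u₁ x) = 0)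
    (he₂ : ∀ x, ∃ L : ℝ, HasPV μ u₂ x L ∧ L + c₂ * deriv u₂ x + f (u₂ x) = 0)
    (hl₁b : Tendsto u₁ atBot (𝓝 (1:ℝ))) (hl₁t : Tendsto u₁ atTop (𝓝 (0:ℝ)))
    (hl₂b : Tendsto u₂ atBot (𝓝 (1:ℝ))) (hl₂t : Tendsto u₂ atTop (𝓝 (0:ℝ))) : False := by
  have hd₁ : Differentiable ℝ u₁ := hs₁.differentiable one_ne_zero
  have hd₂ : Differentiable ℝ u₂ := hs₂.differentiable one_ne_zero
  have hb₁ : ∀ x, 0 ≤ u₁ x ∧ u₁ x ≤ 1 := fun x => mem01 ha₁ hl₁b hl₁t x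
  have hb₂ : ∀ x, 0 ≤ u₂ x ∧ u₂ x ≤ 1 := fun x => mem01 ha₂ hl₂b hl₂t x
  obtain ⟨η, hη, hηs⟩ := eta_lemma hf
  obtain ⟨X, hX⟩ : ∃ X, ∀ x, X ≤ x → u₁ x < η :=
    eventually_atTop.1 (hl₁t.eventually_lt_const hη)
  obtain ⟨Y, hY⟩ : ∃ Y, ∀ y, y ≤ Y → 1 - η < u₂ y :=
    eventually_atBot.1 (hl₂b.eventually_const_lt (by linarith : (1:ℝ) - η < 1))
  -- translates tend to the same limits
  have hshift_b : ∀ ξ : ℝ, Tendsto (fun x : ℝ => x - ξ) atBot atBot := by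
    intro ξ
    simpa [sub_eq_add_neg] using tendsto_atBot_add_const_right atBot (-ξ) tendsto_id
  have hshift_t : ∀ ξ : ℝ, Tendsto (fun x : ℝ => x - ξ) atTop atTop := by
    intro ξ
    simpa [sub_eq_add_neg] using tendsto_atTop_add_const_right atTop (-ξ) tendsto_id
  have hwb : ∀ ξ : ℝ, Tendsto (fun x => u₁ x - u₂ (x - ξ)) atBot (𝓝 0) := by
    intro ξ
    have := hl₁b.sub (hl₂b.comp (hshift_b ξ))
    simpa using this
  have hwt : ∀ ξ : ℝ, Tendsto (fun x => u₁ x - u₂ (x - ξ)) atTop (𝓝 0) := by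
    intro ξ
    have := hl₁t.sub (hl₂t.comp (hshift_t ξ))
    simpa using this
  have hwcont : ∀ ξ : ℝ, Continuous (fun x => u₁ x - u₂ (x - ξ)) := fun ξ =>
    hd₁.continuous.sub (hd₂.continuous.comp (continuous_sub_right ξ))
  -- a maximizer with a positive value pins down its location
  have hloc : ∀ ξ xs : ℝ, (∀ x, u₁ x - u₂ (x - ξ) ≤ u₁ xs - u₂ (xs - ξ)) →
      u₂ (xs - ξ) < u₁ xs → xs < X ∧ Y < xs - ξ := by
    intro ξ xs hmax hpq
    obtain ⟨hfle, _⟩ := max_point hμ hlt ha₁ hs₁ hs₂ he₁ he₂ hb₁ hb₂ hmax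
    obtain ⟨s, hs1, hs2, hs3⟩ := mvt_lemma hf.smooth hpq hfle
    have hsmem := hηs s (le_trans (hb₂ _).1 hs1) (le_trans hs2 (hb₁ _).2) hs3
    have hq : η ≤ u₁ xs := le_trans hsmem.1 hs2
    have hp : u₂ (xs - ξ) ≤ 1 - η := le_trans hs1 hsmem.2
    constructor
    · by_contra h
      push_neg at h
      linarith [hX xs h]
    · by_contra h
      push_neg at h
      linarith [hY _ h]
  by_cases hP : ∃ ξ, ∀ x, u₁ x ≤ u₂ (x - ξ)
  · -- Case A: some translate of u₂ lies above u₁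
    obtain ⟨ξ₀, hξ₀⟩ := hP
    set SS : Set ℝ := {ξ | ∀ x, u₁ x ≤ u₂ (x - ξ)} with hSS
    have hne : SS.Nonempty := ⟨ξ₀, hξ₀⟩
    obtain ⟨x₀, hx₀⟩ : ∃ x₀, (1:ℝ)/2 < u₁ x₀ := by
      obtain ⟨A, hA⟩ := eventually_atBot.1 (hl₁b.eventually_const_lt (by norm_num : (1:ℝ)/2 < 1))
      exact ⟨A, hA A le_rfl⟩
    obtain ⟨Yp, hYp⟩ : ∃ Yp, ∀ y, Yp ≤ y → u₂ y < 1/2 :=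
      eventually_atTop.1 (hl₂t.eventually_lt_const (by norm_num : (0:ℝ) < 1/2))
    have hbdd : BddBelow SS := by
      refine ⟨x₀ - Yp, fun ξ hξ => ?_⟩
      by_contra h
      push_neg at h
      have hYle : Yp ≤ x₀ - ξ := by linarith
      linarith [hYp _ hYle, hξ x₀]
    set ξs := sInf SS with hξsdef
    have hmem : ∀ x, u₁ x ≤ u₂ (x - ξs) := by
      intro x
      have hseq : ∀ n : ℕ, ∃ ξ ∈ SS, ξ < ξs + 1/((n:ℝ)+1) := by
        intro n
        apply exists_lt_of_csInf_lt hne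
        have h0 : (0:ℝ) < 1/((n:ℝ)+1) := by positivity
        linarith
      choose ζ hζS hζlt using hseq
      have hζge : ∀ n, ξs ≤ ζ n := fun n => csInf_le hbdd (hζS n)
      have hζtend : Tendsto ζ atTop (𝓝 ξs) := by
        have h1 : Tendsto (fun n : ℕ => ξs + 1/((n:ℝ)+1)) atTop (𝓝 ξs) := by
          have h2 := tendsto_one_div_add_atTop_nhds_zero_nat (𝕜 := ℝ)
          have h3 := (tendsto_const_nhds : Tendsto (fun _ : ℕ => ξs) atTop (𝓝 ξs)).add h2
          simpa using h3
        exact tendsto_of_tendsto_of_tendsto_of_le_of_le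
          (tendsto_const_nhds : Tendsto (fun _ : ℕ => ξs) atTop (𝓝 ξs))
          h1 hζge (fun n => (hζlt n).le)
      have hcomp : Tendsto (fun n => u₂ (x - ζ n)) atTop (𝓝 (u₂ (x - ξs))) :=
        (hd₂.continuous.tendsto _).comp (tendsto_const_nhds.sub hζtend)
      exact ge_of_tendsto hcomp (Eventually.of_forall fun n => hζS n x)
    set W : ℝ → ℝ := fun x => u₂ (x - ξs) - u₁ x with hW
    have hWnn : ∀ x, 0 ≤ W x := fun x => sub_nonneg.2 (hmem x)
    have hWcont : Continuous W :=
      (hd₂.continuous.comp (continuous_sub_right ξs)).sub hd₁.continuous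
    -- a touching point exists
    have htouch : ∃ xb, W xb = 0 := by
      have hnotmem : ∀ n : ℕ, ∃ x, u₂ (x - (ξs - 1/((n:ℝ)+1))) < u₁ x := by
        intro n
        by_contra h
        push_neg at h
        have hmem' : ξs - 1/((n:ℝ)+1) ∈ SS := h
        have := csInf_le hbdd hmem'
        have h0 : (0:ℝ) < 1/((n:ℝ)+1) := by positivity
        linarith
      have hxn : ∀ n : ℕ, ∃ xn, (∀ x, u₁ x - u₂ (x - (ξs - 1/((n:ℝ)+1))) ≤
          u₁ xn - u₂ (xn - (ξs - 1/((n:ℝ)+1)))) ∧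
          u₂ (xn - (ξs - 1/((n:ℝ)+1))) < u₁ xn ∧ xn ∈ Icc (Y + ξs - 1) X := by
        intro n
        set ξn := ξs - 1/((n:ℝ)+1) with hξn
        obtain ⟨xw, hxw⟩ := hnotmem n
        have hgpos : 0 < u₁ xw - u₂ (xw - ξn) := sub_pos.2 hxw
        obtain ⟨xn, hmaxn⟩ := exists_max (hwcont ξn) (hwb ξn) (hwt ξn) hgpos
        have hgs : u₂ (xn - ξn) < u₁ xn := sub_pos.1 (lt_of_lt_of_le hgpos (hmaxn xw))
        obtain ⟨hx1, hx2⟩ := hloc ξn xn hmaxn hgs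
        refine ⟨xn, hmaxn, hgs, ⟨?_, hx1.le⟩⟩
        have h0 : 1/((n:ℝ)+1) ≤ 1 := by
          rw [div_le_one (by positivity)]
          have : (0:ℝ) ≤ (n:ℝ) := Nat.cast_nonneg n
          linarith
        have : Y + ξn < xn := by linarith
        simp only [hξn] at this
        linarith
      choose xn hmaxn hposn hmemn using hxn
      obtain ⟨xb, _, φ, hφ, hxbtend⟩ :=
        tendsto_subseq_of_bounded (Metric.isBounded_Icc (Y + ξs - 1) X) hmemn
      have hξtend : Tendsto (fun n : ℕ => ξs - 1/((n:ℝ)+1)) atTop (𝓝 ξs) := by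
        have h2 := tendsto_one_div_add_atTop_nhds_zero_nat (𝕜 := ℝ)
        have h3 := (tendsto_const_nhds : Tendsto (fun _ : ℕ => ξs) atTop (𝓝 ξs)).sub h2
        simpa using h3
      have hξφ : Tendsto (fun k : ℕ => ξs - 1/((φ k : ℝ)+1)) atTop (𝓝 ξs) :=
        hξtend.comp hφ.tendsto_atTop
      have hvals : Tendsto (fun k => u₁ (xn (φ k)) - u₂ (xn (φ k) - (ξs - 1/((φ k:ℝ)+1))))
          atTop (𝓝 (u₁ xb - u₂ (xb - ξs))) := by
        refine Tendsto.sub ((hd₁.continuous.tendsto _).comp hxbtend) ?_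
        exact (hd₂.continuous.tendsto _).comp (hxbtend.sub hξφ)
      have hge : 0 ≤ u₁ xb - u₂ (xb - ξs) := by
        refine ge_of_tendsto hvals (Eventually.of_forall fun k => ?_)
        exact (sub_pos.2 (hposn (φ k))).le
      refine ⟨xb, le_antisymm ?_ (hWnn xb)⟩
      simp only [hW]
      linarith
    -- propagation of touching
    have hprop : ∀ xb, W xb = 0 → μ {z : ℝ | z ≠ 0 ∧ W (xb + z) ≠ 0} = 0 := by
      intro xb hxb
      have hxbeq : u₁ xb = u₂ (xb - ξs) := by
        simp only [hW] at hxb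
        linarith
      have hmax0 : ∀ x, u₁ x - u₂ (x - ξs) ≤ u₁ xb - u₂ (xb - ξs) := by
        intro x
        have h1 : u₁ x - u₂ (x - ξs) ≤ 0 := sub_nonpos.2 (hmem x)
        linarith [hxbeq]
      obtain ⟨_, hzero⟩ := max_point hμ hlt ha₁ hs₁ hs₂ he₁ he₂ hb₁ hb₂ hmax0
      have hints := hzero hxbeq
      have hmeasW : MeasurableSet {z : ℝ | W (xb + z) ≠ 0} := by
        have : Continuous (fun z => W (xb + z)) := hWcont.comp (continuous_const.add continuous_id)
        exact (isOpen_ne.preimage this).measurableSet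
      have hnull : ∀ k : ℕ, μ ({z : ℝ | 1/((k:ℝ)+1) ≤ |z|} ∩ {z | W (xb + z) ≠ 0}) = 0 := by
        intro k
        have hδ : (0:ℝ) < 1/((k:ℝ)+1) := by positivity
        have hcongr : ∫ z in {z : ℝ | 1/((k:ℝ)+1) ≤ |z|}, W (xb + z) ∂μ = 0 := by
          rw [← hints (1/((k:ℝ)+1)) hδ]
        have hInt : IntegrableOn (fun z => W (xb + z)) {z : ℝ | 1/((k:ℝ)+1) ≤ |z|} μ := by
          refine integrableOn_tail (C := 2) hμ
            (hWcont.comp (continuous_const.add continuous_id)) (fun z => ?_) hδ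
          have h1 := hb₁ (xb + z); have h2 := hb₂ (xb + z - ξs)
          show |u₂ (xb + z - ξs) - u₁ (xb + z)| ≤ 2
          rw [abs_le]
          constructor <;> linarith [h1.1, h1.2, h2.1, h2.2]
        have hae := (integral_eq_zero_iff_of_nonneg (fun z => hWnn (xb + z)) hInt).1 hcongr
        have hae' : ∀ᵐ z ∂ μ.restrict {z : ℝ | 1/((k:ℝ)+1) ≤ |z|}, W (xb + z) = 0 := by
          filter_upwards [hae] with z hz using hz
        have hres := ae_iff.1 hae'
        rw [Measure.restrict_apply hmeasW] at hres
        refine measure_mono_null ?_ hres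
        rintro z ⟨hz1, hz2⟩
        exact ⟨hz2, hz1⟩
      have hsub : {z : ℝ | z ≠ 0 ∧ W (xb + z) ≠ 0} ⊆
          ⋃ k : ℕ, ({z : ℝ | 1/((k:ℝ)+1) ≤ |z|} ∩ {z | W (xb + z) ≠ 0}) := by
        rintro z ⟨hz0, hzW⟩
        obtain ⟨k, hk⟩ := exists_nat_one_div_lt (abs_pos.2 hz0)
        exact mem_iUnion.2 ⟨k, ⟨hk.le, hzW⟩⟩
      exact measure_mono_null hsub (measure_iUnion_null hnull)
    -- the positive-mass directions
    set ν := μ.restrict {(0:ℝ)}ᶜ with hν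
    have hν0 : 0 < ν univ := by
      rw [hν, Measure.restrict_apply_univ]
      exact hμ0
    set Sp : Set ℝ := {s | ∀ ε : ℝ, 0 < ε → 0 < ν (Metric.ball s ε)} with hSp
    have hSpc : ν (Spᶜ) = 0 := by
      set B : Set (ℚ × ℚ) := {p | ν (Metric.ball ((p.1 : ℝ)) ((p.2 : ℝ))) = 0} with hB
      have hc : ν (⋃ p ∈ B, Metric.ball ((p.1 : ℝ)) ((p.2 : ℝ))) = 0 :=
        (measure_biUnion_null_iff (Set.to_countable B)).2 (fun p hp => hp)
      refine measure_mono_null ?_ hc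
      intro s hs
      simp only [hSp, mem_compl_iff, mem_setOf_eq, not_forall] at hs
      obtain ⟨ε, hε, hsε⟩ := hs
      push_neg at hsε
      have hb0 : ν (Metric.ball s ε) = 0 := le_antisymm hsε zero_le
      obtain ⟨q, hq1, hq2⟩ := exists_rat_btwn (by linarith : s - ε/4 < s)
      obtain ⟨r, hr1, hr2⟩ := exists_rat_btwn (by linarith : ε/4 < ε/2)
      have hqdist : |s - (q:ℝ)| < ε/4 := by
        rw [abs_of_nonneg (by linarith)]
        linarith
      have hball_sub : Metric.ball ((q:ℝ)) ((r:ℝ)) ⊆ Metric.ball s ε := by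
        intro y hy
        rw [Metric.mem_ball, Real.dist_eq] at hy ⊢
        have : |y - s| ≤ |y - (q:ℝ)| + |(q:ℝ) - s| := abs_sub_le y q s
        rw [abs_sub_comm ((q:ℝ)) s] at this
        linarith
      have hmem' : (q, r) ∈ B := by
        simp only [hB, mem_setOf_eq]
        exact measure_mono_null hball_sub hb0
      refine mem_biUnion hmem' ?_
      rw [Metric.mem_ball, Real.dist_eq]
      linarith
    have hcnt_contra : ¬ Sp.Countable := by
      intro hcnt
      have h1 : ν Sp = 0 := by
        have hsub : Sp ⊆ ⋃ x ∈ Sp, {x} := fun x hx => mem_biUnion hx rfl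
        refine measure_mono_null hsub ((measure_biUnion_null_iff hcnt).2 ?_)
        intro x _
        rcases eq_or_ne x 0 with rfl | hx0
        · rw [hν, Measure.restrict_apply (measurableSet_singleton _)]
          simp
        · rw [hν, Measure.restrict_apply (measurableSet_singleton _)]
          exact measure_mono_null inter_subset_left (hμ.diffuse x hx0)
      have hle : ν univ ≤ ν Sp + ν Spᶜ := by
        rw [← union_compl_self Sp]
        exact measure_union_le _ _
      rw [h1, hSpc] at hle
      simpa using lt_of_lt_of_le hν0 hle
    have hsymmSet : ∀ A : Set ℝ, MeasurableSet A → μ A = μ (Neg.neg ⁻¹' A) := by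
      intro A hA
      conv_lhs => rw [← hμ.symm]
      exact Measure.map_apply measurable_neg hA
    have hSpneg : ∀ s ∈ Sp, -s ∈ Sp := by
      intro s hs ε hε
      have h1 : ν (Metric.ball (-s) ε) = ν (Metric.ball s ε) := by
        rw [hν, Measure.restrict_apply measurableSet_ball,
          Measure.restrict_apply measurableSet_ball,
          hsymmSet _ (measurableSet_ball.inter (measurableSet_singleton (0:ℝ)).compl)]
        congr 1
        ext x
        simp only [mem_preimage, mem_inter_iff, Metric.mem_ball, Real.dist_eq, mem_compl_iff,
          mem_singleton_iff, neg_eq_zero]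
        constructor
        · rintro ⟨h1, h2⟩
          refine ⟨?_, h2⟩
          have : |-x - -s| = |x - s| := by
            rw [← abs_neg]
            congr 1
            ring
          linarith [this ▸ h1]
        · rintro ⟨h1, h2⟩
          refine ⟨?_, h2⟩
          have : |-x - -s| = |x - s| := by
            rw [← abs_neg]
            congr 1
            ring
          linarith [this]
      rw [h1]
      exact hs ε hε
    -- zeros of W propagate along Sp
    have hZS : ∀ xb, W xb = 0 → ∀ s ∈ Sp, W (xb + s) = 0 := by
      intro xb hxb s hsSp
      by_contra hne0
      have hpos : 0 < W (xb + s) := lt_of_le_of_ne (hWnn _) (Ne.symm hne0)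
      have hcont : ContinuousAt (fun z => W (xb + z)) s :=
        (hWcont.comp (continuous_const.add continuous_id)).continuousAt
      obtain ⟨ε, hε, hball⟩ := Metric.eventually_nhds_iff.1 (hcont.eventually_const_lt hpos)
      have hν_ball : ν (Metric.ball s ε) = 0 := by
        rw [hν, Measure.restrict_apply measurableSet_ball]
        refine measure_mono_null ?_ (hprop xb hxb)
        rintro z ⟨hz1, hz2⟩
        exact ⟨hz2, ne_of_gt (hball hz1)⟩
      exact absurd hν_ball (ne_of_gt (hsSp ε hε))
    -- propagate along the subgroup generated by Sp
    have hZG : ∀ g ∈ AddSubgroup.closure Sp, ∀ xb, W xb = 0 →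
        W (xb + g) = 0 ∧ W (xb - g) = 0 := by
      intro g hg
      induction hg using AddSubgroup.closure_induction with
      | mem s hs =>
        intro xb hxb
        refine ⟨hZS xb hxb s hs, ?_⟩
        have := hZS xb hxb (-s) (hSpneg s hs)
        simpa [sub_eq_add_neg] using this
      | zero =>
        intro xb hxb
        constructor
        · simpa using hxb
        · simpa using hxb
      | add a b ha hb iha ihb =>
        intro xb hxb
        constructor
        · have h1 := (iha xb hxb).1
          have h2 := (ihb (xb + a) h1).1
          rwa [add_assoc] at h2
        · have h1 := (iha xb hxb).2
          have h2 := (ihb (xb - a) h1).2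
          rwa [sub_sub] at h2
      | neg a ha iha =>
        intro xb hxb
        constructor
        · have := (iha xb hxb).2
          rwa [sub_eq_add_neg] at this
        · have := (iha xb hxb).1
          rwa [sub_neg_eq_add]
    rcases AddSubgroup.dense_or_cyclic (AddSubgroup.closure Sp) with hdense | ⟨a, ha⟩
    · -- dense subgroup: W vanishes identically, so u₁ is a translate of u₂
      obtain ⟨xb, hxb⟩ := htouch
      have hZuniv : ∀ x, W x = 0 := by
        intro x
        have hxcl : x - xb ∈ closure ((AddSubgroup.closure Sp : AddSubgroup ℝ) : Set ℝ) :=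
          hdense _
        obtain ⟨seq, hseqmem, hseqlim⟩ := mem_closure_iff_seq_limit.1 hxcl
        have hlim : Tendsto (fun n => W (xb + seq n)) atTop (𝓝 (W (xb + (x - xb)))) :=
          (hWcont.tendsto _).comp (tendsto_const_nhds.add hseqlim)
        have hz : ∀ n, W (xb + seq n) = 0 := fun n => (hZG _ (hseqmem n) xb hxb).1
        have h0 : Tendsto (fun _ : ℕ => (0:ℝ)) atTop (𝓝 (W (xb + (x - xb)))) := by
          refine hlim.congr fun n => (hz n)
        have := tendsto_nhds_unique h0 tendsto_const_nhds
        rwa [add_sub_cancel] at this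
      have hflat : ∀ x, u₁ x = u₂ (x - ξs) := by
        intro x
        have := hZuniv x
        simp only [hW] at this
        linarith
      have hderiv0 : ∀ x, deriv u₁ x = 0 := by
        intro x
        obtain ⟨L₁, hPV₁, heq₁⟩ := he₁ x
        obtain ⟨L₂, hPV₂, heq₂⟩ := he₂ (x - ξs)
        have hPV₂' : HasPV μ (fun y => u₂ (y - ξs)) x L₂ := hasPV_translate hPV₂
        have hfun : u₁ = (fun y => u₂ (y - ξs)) := funext hflat
        have hL : L₁ = L₂ := tendsto_nhds_unique hPV₁ (hfun ▸ hPV₂')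
        have hdd : deriv u₁ x = deriv u₂ (x - ξs) := by
          rw [hfun]
          exact deriv_comp_sub_const u₂ ξs x
        rw [hflat x] at heq₁
        rw [← hdd] at heq₂
        have h3 : (c₁ - c₂) * deriv u₁ x = 0 := by
          have : c₁ * deriv u₁ x = c₂ * deriv u₁ x := by linarith
          linarith [this]
        rcases mul_eq_zero.1 h3 with h | h
        · exfalso; linarith
        · exact h
      have hconst : ∀ x, u₁ x = u₁ 0 := fun x => is_const_of_deriv_eq_zero hd₁ hderiv0 x 0
      have h1 : Tendsto u₁ atBot (𝓝 (u₁ 0)) := by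
        have : u₁ = fun _ => u₁ 0 := funext hconst
        rw [this]
        exact tendsto_const_nhds
      have h2 : Tendsto u₁ atTop (𝓝 (u₁ 0)) := by
        have : u₁ = fun _ => u₁ 0 := funext hconst
        rw [this]
        exact tendsto_const_nhds
      have e1 : u₁ 0 = 1 := tendsto_nhds_unique h1 hl₁b
      have e2 : u₁ 0 = 0 := tendsto_nhds_unique h2 hl₁t
      rw [e1] at e2
      exact one_ne_zero e2
    · -- cyclic subgroup: Sp would be countable, contradiction
      apply hcnt_contra
      have hsub : Sp ⊆ range (fun n : ℤ => n • a) := by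
        intro s hs
        have hmem' : s ∈ AddSubgroup.closure Sp := AddSubgroup.subset_closure hs
        rw [ha] at hmem'
        obtain ⟨n, hn⟩ := AddSubgroup.mem_closure_singleton.1 hmem'
        exact ⟨n, hn⟩
      exact Set.Countable.mono hsub (countable_range _)
  · -- Case B: no translate of u₂ lies above u₁
    push_neg at hP
    set ξ := X - Y + 1 with hξ
    obtain ⟨x₀, hx₀⟩ := hP ξ
    have hgpos : 0 < u₁ x₀ - u₂ (x₀ - ξ) := sub_pos.2 hx₀
    obtain ⟨xs, hmax⟩ := exists_max (hwcont ξ) (hwb ξ) (hwt ξ) hgpos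
    have hgs : u₂ (xs - ξ) < u₁ xs := sub_pos.1 (lt_of_lt_of_le hgpos (hmax x₀))
    obtain ⟨hx1, hx2⟩ := hloc ξ xs hmax hgs
    rw [hξ] at hx2
    linarith

end SpeedAux

/-- uniqueness of the speed for bistable fronts. -/
theorem bistable_speed_unique
    (μ : Measure ℝ) (hμ : LevyMeasure μ) (hμ0 : 0 < μ ({(0 : ℝ)}ᶜ))
    (f : ℝ → ℝ) (hf : ∃ θ, Bistable f θ)
    (hint : 0 < ∫ s in (0:ℝ)..1, f s)
    (c₁ c₂ : ℝ) (u₁ u₂ : ℝ → ℝ)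
    (hc₁ : 0 < c₁) (hc₂ : 0 < c₂)
    (hb₁ : ∃ M : ℝ, ∀ x, |u₁ x| ≤ M) (hb₂ : ∃ M : ℝ, ∀ x, |u₂ x| ≤ M)
    (ha₁ : Antitone u₁) (ha₂ : Antitone u₂)
    (hs₁ : ContDiff ℝ 1 u₁) (hs₂ : ContDiff ℝ 1 u₂)
    (he₁ : ∀ x, ∃ L : ℝ, HasPV μ u₁ x L ∧ L + c₁ * deriv u₁ x + f (u₁ x) = 0)
    (he₂ : ∀ x, ∃ L : ℝ, HasPV μ u₂ x L ∧ L + c₂ * deriv u₂ x + f (u₂ x) = 0)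
    (hl₁b : Tendsto u₁ atBot (𝓝 (1 : ℝ))) (hl₁t : Tendsto u₁ atTop (𝓝 (0 : ℝ)))
    (hl₂b : Tendsto u₂ atBot (𝓝 (1 : ℝ))) (hl₂t : Tendsto u₂ atTop (𝓝 (0 : ℝ))) :
    c₁ = c₂ := by
  obtain ⟨θ, hfθ⟩ := hf
  by_contra hne
  rcases lt_or_gt_of_ne hne with h | h
  · exact SpeedAux.key hμ hμ0 hfθ h ha₂ ha₁ hs₂ hs₁ he₂ he₁ hl₂b hl₂t hl₁b hl₁t
  · exact SpeedAux.key hμ hμ0 hfθ h ha₁ ha₂ hs₁ hs₂ he₁ he₂ hl₁b hl₁t hl₂b hl₂t
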